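/- arXiv:1702.02375 — 4 statements merged into one kernel-verified Lean document; each statement's English description precedes it below -/
import Mathlib

section
/- Let B be an infinite primitive set of positive integers. The following are equivalent: (i) the window W is topologically regular, i.e., W equals the closure of its interior in H; (ii) there are no d ∈ ℕ and no infinite pairwise coprime set A ⊆ ℕ \ {1} such that d·A ⊆ B; (iii) A_∞ = ∅; (iv) E = F_B. -/
open Set MeasureTheory Filter Topology

namespace BFree

/-- The ambient compact group `∏_{b ∈ B} ℤ/bℤ`. -/
abbrev Gspace (B : Set ℕ+) : Type := ∀ b : B, ZMod ((b : ℕ+) : ℕ)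

/-- The diagonal embedding `Δ : ℤ → ∏_{b ∈ B} ℤ/bℤ`. -/
def delta (B : Set ℕ+) : ℤ →+ Gspace B where
  toFun n := fun b => (n : ZMod ((b : ℕ+) : ℕ))
  map_zero' := by funext b; simp
  map_add' m n := by funext b; simp

/-- `H`, the closure of `Δ(ℤ)`, as a (closed) subgroup of `Gspace B`. -/
def Hgrp (B : Set ℕ+) : AddSubgroup (Gspace B) :=
  (delta B).range.topologicalClosure

/-- `H` as a compact topological group. -/
abbrev Hspace (B : Set ℕ+) : Type := ↥(Hgrp B)

instance (B : Set ℕ+) : CompactSpace (Hspace B) :=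
  isCompact_iff_compactSpace.mp
    (IsClosed.isCompact (AddSubgroup.isClosed_topologicalClosure _))

instance (B : Set ℕ+) : BorelSpace (Hspace B) := Subtype.borelSpace _

/-- The window `W = {h ∈ H : h_b ≠ 0 for all b ∈ B}`. -/
def window (B : Set ℕ+) : Set (Hspace B) :=
  {h | ∀ b : B, (h : Gspace B) b ≠ 0}

/-- `Δ(n)` as an element of `H`. -/
def deltaH (B : Set ℕ+) (n : ℤ) : Hspace B :=
  ⟨delta B n, (delta B).range.le_topologicalClosure ⟨n, rfl⟩⟩

/-- The set of multiples `M_B ⊆ ℤ` of a set `B` of positive integers. -/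
def MultSet (B : Set ℕ+) : Set ℤ := {n | ∃ b ∈ B, ((b : ℕ) : ℤ) ∣ n}

/-- The `B`-free set `F_B = ℤ ∖ M_B`. -/
def FreeSet (B : Set ℕ+) : Set ℤ := {n | ∀ b ∈ B, ¬ ((b : ℕ) : ℤ) ∣ n}

/-- Set of multiples of a set of natural numbers. -/
def MultSetN (C : Set ℕ) : Set ℤ := {n | ∃ c ∈ C, (c : ℤ) ∣ n}

/-- Free set of a set of natural numbers. -/
def FreeSetN (C : Set ℕ) : Set ℤ := {n | ∀ c ∈ C, ¬ (c : ℤ) ∣ n}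

/-- `#(M ∩ [1, N]) / N`. -/
noncomputable def densSeq (M : Set ℤ) (N : ℕ) : ℝ :=
  (Nat.card ↥(M ∩ Set.Icc (1 : ℤ) (N : ℤ)) : ℝ) / N

/-- Lower (asymptotic) density of a set of integers. -/
noncomputable def lowerDensity (M : Set ℤ) : ℝ := Filter.liminf (densSeq M) Filter.atTop

/-- Upper (asymptotic) density of a set of integers. -/
noncomputable def upperDensity (M : Set ℤ) : ℝ := Filter.limsup (densSeq M) Filter.atTop

/-- `B` is taut if removing any element strictly decreases the lower density
of the set of multiples. -/
def Taut (B : Set ℕ+) : Prop :=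
  ∀ b ∈ B, lowerDensity (MultSet (B \ {b})) < lowerDensity (MultSet B)

/-- `B` is primitive if no element divides another. -/
def Primitive (B : Set ℕ+) : Prop :=
  ∀ b ∈ B, ∀ b' ∈ B, (b : ℕ) ∣ (b' : ℕ) → b = b'

/-- `lcm(S)` for a finite set of positive integers. -/
def lcmS (S : Finset ℕ+) : ℕ := S.lcm fun b => (b : ℕ)

/-- `A_S = {gcd(b, lcm S) : b ∈ B}`. -/
def ASet (B : Set ℕ+) (S : Finset ℕ+) : Set ℕ :=
  {m | ∃ b ∈ B, m = Nat.gcd (b : ℕ) (lcmS S)}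

/-- The cylinder set `U_S(h) ⊆ H`. -/
def cyl (B : Set ℕ+) (S : Finset ℕ+) (hS : ↑S ⊆ B) (h : Hspace B) : Set (Hspace B) :=
  {h' | ∀ b, ∀ hb : b ∈ S, (h' : Gspace B) ⟨b, hS hb⟩ = (h : Gspace B) ⟨b, hS hb⟩}

/-- `E = ⋃_{S ⊆ B finite} F_{A_S}`. -/
def Eset (B : Set ℕ+) : Set ℤ :=
  ⋃ (S : Finset ℕ+) (_ : ↑S ⊆ B), FreeSetN (ASet B S)

/-- `A_∞`. -/
def Ainfty (B : Set ℕ+) : Set ℕ :=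
  {n | ∀ S : Finset ℕ+, ↑S ⊆ B →
    ∃ S' : Finset ℕ+, S ⊆ S' ∧ ↑S' ⊆ B ∧ n ∈ ASet B S' ∧ ∀ b ∈ S', (b : ℕ) ≠ n}

/-- The indicator `η` of the `B`-free set, as a point of `{0,1}^ℤ`. -/
noncomputable def eta (B : Set ℕ+) : ℤ → Bool :=
  fun n => @decide (n ∈ FreeSet B) (Classical.propDecidable _)

/-- The left shift on `{0,1}^ℤ`, iterated `k` times (`k ∈ ℤ`). -/
def shift (k : ℤ) (x : ℤ → Bool) : ℤ → Bool := fun n => x (n + k)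

/-- The orbit closure `X_η` of `η` in `{0,1}^ℤ`. -/
noncomputable def Xeta (B : Set ℕ+) : Set (ℤ → Bool) :=
  closure {x | ∃ k : ℤ, x = shift k (eta B)}

/-! ### Auxiliary lemmas -/

section Aux

variable {B : Set ℕ+}

lemma lcmS_ne_zero (S : Finset ℕ+) : lcmS S ≠ 0 := by
  intro h
  rw [lcmS, Finset.lcm_eq_zero_iff] at h
  obtain ⟨b, -, hb⟩ := h
  exact PNat.ne_zero b hb

lemma dvd_lcmS {S : Finset ℕ+} {b : ℕ+} (hb : b ∈ S) : (b : ℕ) ∣ lcmS S :=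
  Finset.dvd_lcm hb

lemma lcmS_dvd_lcmS {S T : Finset ℕ+} (h : S ⊆ T) : lcmS S ∣ lcmS T :=
  Finset.lcm_dvd fun b hb => Finset.dvd_lcm (h hb)

lemma isClosed_window : IsClosed (window B) := by
  have hw : window B = ⋂ b : B, {h : Hspace B | (h : Gspace B) b ≠ 0} := by
    ext h; simp [window, Set.mem_iInter]
  rw [hw]
  refine isClosed_iInter fun b => ?_
  have hc : Continuous fun h : Hspace B => (h : Gspace B) b :=
    (continuous_apply b).comp continuous_subtype_val
  exact (isClosed_discrete {x : ZMod ((b : ℕ+) : ℕ) | x ≠ 0}).preimage hc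

lemma exists_cyl_subset {x : Hspace B} {V : Set (Hspace B)} (hV : V ∈ 𝓝 x) :
    ∃ F : Finset ↥B,
      {y : Hspace B | ∀ i ∈ F, (y : Gspace B) i = (x : Gspace B) i} ⊆ V := by
  obtain ⟨x, hx⟩ := x
  rw [nhds_subtype_eq_comap] at hV
  obtain ⟨U, hU, hUV⟩ := hV
  rw [nhds_pi, Filter.mem_pi] at hU
  obtain ⟨I, hIfin, t, ht, hsub⟩ := hU
  refine ⟨hIfin.toFinset, fun y hy => hUV ?_⟩
  refine hsub fun i hi => ?_
  have := hy i (hIfin.mem_toFinset.2 hi)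
  simp only [Set.mem_setOf_eq] at this ⊢
  rw [this]
  exact mem_of_mem_nhds (ht i)

lemma isOpen_cyl (F : Finset ↥B) (x : Gspace B) :
    IsOpen {y : Hspace B | ∀ i ∈ F, (y : Gspace B) i = x i} := by
  have : {y : Hspace B | ∀ i ∈ F, (y : Gspace B) i = x i} =
      ⋂ i ∈ F, (fun y : Hspace B => (y : Gspace B) i) ⁻¹' {x i} := by
    ext y; simp
  rw [this]
  refine isOpen_biInter_finset fun i _ => ?_
  exact (isOpen_discrete {x i}).preimage ((continuous_apply i).comp continuous_subtype_val)

lemma coe_mem_closure (x : Hspace B) : (x : Gspace B) ∈ closure (Set.range ⇑(delta B)) := by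
  have h3 : ((delta B).range : Set (Gspace B)) = Set.range ⇑(delta B) := by
    ext y; simp [AddMonoidHom.mem_range]
  rw [← h3]
  exact x.2

lemma exists_match (x : Hspace B) (F : Finset ↥B) :
    ∃ n : ℤ, ∀ i ∈ F, (x : Gspace B) i = ((n : ℤ) : ZMod ((i : ℕ+) : ℕ)) := by
  have hx := coe_mem_closure x
  have hU : IsOpen {y : Gspace B | ∀ i ∈ F, y i = (x : Gspace B) i} := by
    have : {y : Gspace B | ∀ i ∈ F, y i = (x : Gspace B) i} =
        ⋂ i ∈ F, (fun y : Gspace B => y i) ⁻¹' {(x : Gspace B) i} := by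
      ext y; simp
    rw [this]
    exact isOpen_biInter_finset fun i _ =>
      (isOpen_discrete {(x : Gspace B) i}).preimage (continuous_apply i)
  obtain ⟨y, hyU, hyR⟩ := mem_closure_iff.1 hx _ hU (fun i _ => rfl)
  obtain ⟨n, rfl⟩ := hyR
  exact ⟨n, fun i hi => (hyU i hi).symm⟩

lemma denseRange_deltaH : Dense (Set.range (deltaH B)) := by
  rw [dense_iff_inter_open]
  rintro U hU ⟨x, hxU⟩
  obtain ⟨V, hV, rfl⟩ := isOpen_induced_iff.1 hU
  obtain ⟨y, hyV, n, rfl⟩ := mem_closure_iff.1 (coe_mem_closure x) V hV hxU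
  exact ⟨deltaH B n, hyV, ⟨n, rfl⟩⟩

lemma bezout_step {b L : ℕ} {n : ℤ} (h : ((Nat.gcd b L : ℕ) : ℤ) ∣ n) :
    ∃ k : ℤ, (b : ℤ) ∣ n + k * L := by
  obtain ⟨c, hc⟩ := h
  refine ⟨-(Int.gcdB b L * c), ⟨Int.gcdA (b : ℤ) (L : ℤ) * c, ?_⟩⟩
  have hg : ((Nat.gcd b L : ℕ) : ℤ) = (b : ℤ) * Int.gcdA b L + (L : ℤ) * Int.gcdB b L := by
    rw [← Int.gcd_natCast_natCast b L]
    exact Int.gcd_eq_gcd_ab (b : ℤ) (L : ℤ)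
  rw [hc, hg]
  ring

lemma mem_Eset_of_interior {n : ℤ} (h : deltaH B n ∈ interior (window B)) : n ∈ Eset B := by
  have hmem : window B ∈ 𝓝 (deltaH B n) :=
    Filter.mem_of_superset ((isOpen_interior).mem_nhds h) interior_subset
  obtain ⟨F, hF⟩ := exists_cyl_subset hmem
  classical
  set T : Finset ℕ+ := F.image (fun i : ↥B => i.1) with hT
  have hTB : ↑T ⊆ B := by
    intro b hb
    rw [hT, Finset.coe_image] at hb
    obtain ⟨i, -, rfl⟩ := hb
    exact i.2
  refine Set.mem_iUnion.2 ⟨T, Set.mem_iUnion.2 ⟨hTB, ?_⟩⟩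
  intro c hc hdvd
  obtain ⟨b, hbB, rfl⟩ := hc
  obtain ⟨k, hk⟩ := bezout_step (L := lcmS T) hdvd
  have hmem2 : deltaH B (n + k * lcmS T) ∈
      {y : Hspace B | ∀ i ∈ F, (y : Gspace B) i = ((deltaH B n : Hspace B) : Gspace B) i} := by
    intro i hi
    have hdl : ((i : ℕ+) : ℕ) ∣ lcmS T :=
      dvd_lcmS (Finset.mem_image.2 ⟨i, hi, rfl⟩)
    show ((n + k * lcmS T : ℤ) : ZMod ((i : ℕ+) : ℕ)) = ((n : ℤ) : ZMod ((i : ℕ+) : ℕ))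
    rw [ZMod.intCast_eq_intCast_iff]
    have hdvd2 : ((((i : ℕ+) : ℕ)) : ℤ) ∣ (n - (n + k * lcmS T)) := by
      have h3 : ((((i : ℕ+) : ℕ)) : ℤ) ∣ (k * (lcmS T : ℤ)) :=
        Dvd.dvd.mul_left (Int.natCast_dvd_natCast.2 hdl) k
      have h4 : n - (n + k * (lcmS T : ℤ)) = -(k * (lcmS T : ℤ)) := by ring
      rw [h4]
      exact dvd_neg.2 h3
    exact Int.modEq_iff_dvd.2 hdvd2
  have hwin := hF hmem2
  have hnz := hwin ⟨b, hbB⟩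
  apply hnz
  show ((n + k * lcmS T : ℤ) : ZMod ((b : ℕ+) : ℕ)) = 0
  rw [ZMod.intCast_zmod_eq_zero_iff_dvd]
  exact hk

lemma not_mem_Eset_iff {n : ℤ} :
    n ∉ Eset B ↔ ∀ T : Finset ℕ+, ↑T ⊆ B → ∃ c ∈ ASet B T, (c : ℤ) ∣ n := by
  constructor
  · intro h T hT
    by_contra hc
    push_neg at hc
    exact h (Set.mem_iUnion.2 ⟨T, Set.mem_iUnion.2 ⟨hT, fun c hcm hdvd => hc c hcm hdvd⟩⟩)
  · intro h hmem
    obtain ⟨T, hT⟩ := Set.mem_iUnion.1 hmem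
    obtain ⟨hTB, hfree⟩ := Set.mem_iUnion.1 hT
    obtain ⟨c, hcm, hdvd⟩ := h T hTB
    exact hfree c hcm hdvd

lemma Eset_subset_FreeSet : Eset B ⊆ FreeSet B := by
  intro n hn
  obtain ⟨T, hT⟩ := Set.mem_iUnion.1 hn
  obtain ⟨hTB, hfree⟩ := Set.mem_iUnion.1 hT
  intro b hbB hdvd
  refine hfree (Nat.gcd ((b : ℕ)) (lcmS T)) ⟨b, hbB, rfl⟩ ?_
  exact dvd_trans (Int.natCast_dvd_natCast.2 (Nat.gcd_dvd_left _ _)) hdvd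


lemma crt_trick (L M : ℕ) (hL : L ≠ 0) (hM : M ≠ 0) (n₀ : ℤ) :
    ∃ n : ℤ, n ≡ n₀ [ZMOD (L : ℤ)] ∧ ∀ c : ℕ, c ∣ M → (c : ℤ) ∣ n → c ∣ L := by
  classical
  have key : ∀ Q : Finset ℕ, (∀ q ∈ Q, q.Prime) →
      ∃ n : ℤ, n ≡ n₀ [ZMOD (L : ℤ)] ∧
        ∀ q ∈ Q, ¬ ((q : ℤ) ^ (L.factorization q + 1) ∣ n) := by
    intro Q
    induction Q using Finset.induction_on with
    | empty => exact fun _ => ⟨n₀, Int.ModEq.refl _, by simp⟩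
    | @insert a Q' ha ih =>
      intro hprimes
      have haP : a.Prime := hprimes a (Finset.mem_insert_self _ _)
      obtain ⟨n, hn₀, hn⟩ := ih fun q hq => hprimes q (Finset.mem_insert_of_mem hq)
      set D : ℕ := L * ∏ q ∈ Q', q ^ (L.factorization q + 1) with hD
      have hcop : Nat.Coprime (a ^ (L.factorization a + 1))
          (∏ q ∈ Q', q ^ (L.factorization q + 1)) := by
        apply Nat.Coprime.pow_left
        apply Nat.Coprime.prod_right
        intro q hq
        apply Nat.Coprime.pow_right
        exact (Nat.coprime_primes haP (hprimes q (Finset.mem_insert_of_mem hq))).2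
          (by rintro rfl; exact ha hq)
      have hnda : ¬ ((a : ℕ) ^ (L.factorization a + 1) ∣ D) := by
        intro hdvd
        have h1 : a ^ (L.factorization a + 1) ∣ L := hcop.dvd_of_dvd_mul_right (by rwa [← hD])
        have := (Nat.Prime.pow_dvd_iff_le_factorization haP hL).1 h1
        omega
      by_cases hcase : ((a : ℤ) ^ (L.factorization a + 1) ∣ n)
      · refine ⟨n + D, ?_, ?_⟩
        · have : (L : ℤ) ∣ (D : ℤ) := Int.natCast_dvd_natCast.2 ⟨_, hD⟩
          calc n + (D : ℤ) ≡ n + 0 [ZMOD (L : ℤ)] :=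
                (Int.modEq_zero_iff_dvd.2 this).add_left n
            _ ≡ n₀ [ZMOD (L : ℤ)] := by simpa using hn₀
        · intro q hq
          rcases Finset.mem_insert.1 hq with rfl | hq'
          · intro hdvd
            have : ((q : ℤ) ^ (L.factorization q + 1) ∣ (D : ℤ)) := by
              have := dvd_sub hdvd hcase
              simpa using this
            rw [show ((q : ℤ) ^ (L.factorization q + 1)) = ((q ^ (L.factorization q + 1) : ℕ) : ℤ) by push_cast; ring] at this
            exact hnda (Int.natCast_dvd_natCast.1 this)
          · intro hdvd
            apply hn q hq'
            have hqD : ((q : ℤ) ^ (L.factorization q + 1) ∣ (D : ℤ)) := by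
              rw [show ((q : ℤ) ^ (L.factorization q + 1)) = ((q ^ (L.factorization q + 1) : ℕ) : ℤ) by push_cast; ring]
              apply Int.natCast_dvd_natCast.2
              exact Dvd.dvd.mul_left (Finset.dvd_prod_of_mem _ hq') L
            have := dvd_sub hdvd hqD
            simpa using this
      · refine ⟨n, hn₀, ?_⟩
        intro q hq
        rcases Finset.mem_insert.1 hq with rfl | hq'
        · exact hcase
        · exact hn q hq'
  obtain ⟨n, hn₀, hn⟩ := key M.primeFactors (fun q hq => Nat.prime_of_mem_primeFactors hq)
  refine ⟨n, hn₀, ?_⟩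
  intro c hcM hcn
  have hc0 : c ≠ 0 := by rintro rfl; exact hM (Nat.zero_dvd.1 hcM)
  rw [← Nat.factorization_le_iff_dvd hc0 hL]
  intro p
  by_cases hp : p.Prime
  · by_cases hpc : p ∣ c
    · have hpM : p ∈ M.primeFactors := Nat.mem_primeFactors.2 ⟨hp, hpc.trans hcM, hM⟩
      by_contra hlt
      push_neg at hlt
      have hpow : p ^ (L.factorization p + 1) ∣ c :=
        (Nat.Prime.pow_dvd_iff_le_factorization hp hc0).2 (by omega)
      apply hn p hpM
      calc ((p : ℤ) ^ (L.factorization p + 1)) = ((p ^ (L.factorization p + 1) : ℕ) : ℤ) := by push_cast; ring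
        _ ∣ (c : ℤ) := Int.natCast_dvd_natCast.2 hpow
        _ ∣ n := hcn
    · simp [Nat.factorization_eq_zero_of_not_dvd hpc]
  · simp [Nat.factorization_eq_zero_of_not_prime _ hp]

lemma exists_infinite_constant {f : ℕ → ℕ} {N : ℕ} (hf : ∀ k, f k ≤ N) :
    ∃ m, m ≤ N ∧ {k | f k = m}.Infinite := by
  haveI : Finite {i : ℕ // i ≤ N} := by
    have : Finite ↥(Set.Iic N) := (Set.finite_Iic N).to_subtype
    exact this
  obtain ⟨⟨m, hm⟩, hfib⟩ := Finite.exists_infinite_fiber (fun k => (⟨f k, hf k⟩ : {i : ℕ // i ≤ N}))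
  refine ⟨m, hm, ?_⟩
  rw [← Set.infinite_coe_iff]
  have : (fun k => (⟨f k, hf k⟩ : {i : ℕ // i ≤ N})) ⁻¹' {⟨m, hm⟩} = {k | f k = m} := by
    ext k; simp [Subtype.ext_iff]
  rwa [this] at hfib

lemma exists_exhaustion (hB : B.Infinite) :
    ∃ T : ℕ → Finset ℕ+, (∀ k, ↑(T k) ⊆ B) ∧ Monotone T ∧
      (∀ S₀ : Finset ℕ+, ↑S₀ ⊆ B → ∃ k₀, ∀ k, k₀ ≤ k → S₀ ⊆ T k) := by
  obtain ⟨e, he⟩ := (Set.to_countable B).exists_eq_range hB.nonempty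
  refine ⟨fun k => (Finset.range (k + 1)).image e, ?_, ?_, ?_⟩
  · intro k x hx
    simp only [Finset.coe_image] at hx
    obtain ⟨i, -, rfl⟩ := hx
    rw [he]; exact ⟨i, rfl⟩
  · intro k l hkl
    apply Finset.image_subset_image
    exact Finset.range_subset_range.2 (by omega)
  · intro S₀
    induction S₀ using Finset.induction_on with
    | empty => exact fun _ => ⟨0, fun k _ => Finset.empty_subset _⟩
    | @insert b S₀' hb ih =>
      intro hsub
      obtain ⟨k₀, hk₀⟩ := ih fun x hx => hsub (Finset.mem_insert_of_mem hx)
      have hbB : b ∈ B := hsub (Finset.mem_insert_self _ _)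
      rw [he] at hbB
      obtain ⟨i, hi⟩ := hbB
      refine ⟨max k₀ i, fun k hk => Finset.insert_subset ?_ (hk₀ k (le_trans (le_max_left _ _) hk))⟩
      exact Finset.mem_image.2 ⟨i, Finset.mem_range.2 (by omega), hi⟩
lemma freeset_diff_eset_of_ainfty {n : ℕ} (hprim : Primitive B) (hn : n ∈ Ainfty B) :
    (n : ℤ) ∈ FreeSet B ∧ (n : ℤ) ∉ Eset B := by
  constructor
  · intro p hpB hdvd
    rw [Int.natCast_dvd_natCast] at hdvd
    obtain ⟨S', hsub, hS'B, ⟨b', hb'B, hgcd⟩, hne⟩ := hn {p} (by simpa using hpB)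
    have hnb' : n ∣ (b' : ℕ) := hgcd ▸ Nat.gcd_dvd_left _ _
    have hpeq : p = b' := hprim p hpB b' hb'B (hdvd.trans hnb')
    have hpS' : p ∈ S' := hsub (Finset.mem_singleton_self p)
    refine hne p hpS' ?_
    rw [hgcd, ← hpeq]
    exact (Nat.gcd_eq_left (dvd_lcmS hpS')).symm
  · rw [not_mem_Eset_iff]
    intro T hT
    obtain ⟨S', hsub, hS'B, ⟨b', hb'B, hgcd⟩, hne⟩ := hn T hT
    refine ⟨Nat.gcd (b' : ℕ) (lcmS T), ⟨b', hb'B, rfl⟩, ?_⟩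
    rw [Int.natCast_dvd_natCast, hgcd]
    exact Nat.dvd_gcd (Nat.gcd_dvd_left _ _) ((Nat.gcd_dvd_right _ _).trans (lcmS_dvd_lcmS hsub))

lemma ainfty_nonempty_of_ne (hB : B.Infinite) (hne : Eset B ≠ FreeSet B) :
    (Ainfty B).Nonempty := by
  obtain ⟨T, hTB, hTmono, hTcov⟩ := exists_exhaustion hB
  obtain ⟨n, hnF, hnE⟩ := Set.exists_of_ssubset (Eset_subset_FreeSet.ssubset_of_ne hne)
  have hn0 : n ≠ 0 := by
    obtain ⟨b, hb⟩ := hB.nonempty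
    intro h; subst h; exact hnF b hb (dvd_zero _)
  rw [not_mem_Eset_iff] at hnE
  choose c hc1 hc2 using fun k => hnE (T k) (hTB k)
  have hcb : ∀ k, c k ≤ n.natAbs :=
    fun k => Nat.le_of_dvd (Int.natAbs_pos.2 hn0) (Int.natCast_dvd.1 (hc2 k))
  obtain ⟨m, -, hK⟩ := exists_infinite_constant hcb
  refine ⟨m, fun S₀ hS₀ => ?_⟩
  obtain ⟨k₀, hk₀⟩ := hTcov S₀ hS₀
  obtain ⟨k, hkK, hkk₀⟩ := hK.exists_gt k₀
  have hck : c k = m := hkK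
  refine ⟨T k, hk₀ k (le_of_lt hkk₀), hTB k, hck ▸ hc1 k, ?_⟩
  intro b hbTk hbm
  apply hnF b (hTB k hbTk)
  have : ((c k : ℕ) : ℤ) ∣ n := hc2 k
  rwa [hck, ← hbm] at this

lemma exists_dA {n : ℕ} (hprim : Primitive B) (hn : n ∈ Ainfty B) :
    ∃ (d : ℕ) (A : Set ℕ), A.Infinite ∧ (∀ a ∈ A, 1 < a) ∧ A.Pairwise Nat.Coprime ∧
      (∀ a ∈ A, ∃ b ∈ B, (b : ℕ) = d * a) := by
  classical
  have hnB : ∀ p : ℕ+, p ∈ B → (p : ℕ) ≠ n := by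
    intro p hpB hpn
    obtain ⟨S', hsub, -, -, hne⟩ := hn {p} (by simpa using hpB)
    exact hne p (hsub (Finset.mem_singleton_self p)) hpn
  have step : ∀ q : {p : Finset ℕ+ × ℕ+ // ↑p.1 ⊆ B ∧ p.2 ∈ B ∧ n = Nat.gcd (p.2 : ℕ) (lcmS p.1)},
      ∃ q' : {p : Finset ℕ+ × ℕ+ // ↑p.1 ⊆ B ∧ p.2 ∈ B ∧ n = Nat.gcd (p.2 : ℕ) (lcmS p.1)},
        insert q.1.2 q.1.1 ⊆ q'.1.1 := by
    rintro ⟨⟨S, b⟩, hSB, hbB, -⟩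
    have hins : ↑(insert b S) ⊆ B := by
      intro x hx
      rw [Finset.coe_insert, Set.mem_insert_iff] at hx
      rcases hx with rfl | hx
      · exact hbB
      · exact hSB hx
    obtain ⟨S', hsub, hS'B, ⟨b', hb'B, hgcd⟩, -⟩ := hn (insert b S) hins
    exact ⟨⟨(S', b'), hS'B, hb'B, hgcd⟩, hsub⟩
  have base : Nonempty {p : Finset ℕ+ × ℕ+ // ↑p.1 ⊆ B ∧ p.2 ∈ B ∧ n = Nat.gcd (p.2 : ℕ) (lcmS p.1)} := by
    have hemp : ↑(∅ : Finset ℕ+) ⊆ B := by simp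
    obtain ⟨S', hsub, hS'B, hmem, -⟩ := hn ∅ hemp
    obtain ⟨b', hb'B, hgcd⟩ := hmem
    exact ⟨⟨(S', b'), hS'B, hb'B, hgcd⟩⟩
  set f : ℕ → {p : Finset ℕ+ × ℕ+ // ↑p.1 ⊆ B ∧ p.2 ∈ B ∧ n = Nat.gcd (p.2 : ℕ) (lcmS p.1)} :=
    fun k => Nat.rec (Classical.choice base) (fun _ q => (step q).choose) k with hf
  have hstep : ∀ k, insert (f k).1.2 (f k).1.1 ⊆ (f (k + 1)).1.1 :=
    fun k => (step (f k)).choose_spec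
  have hmono : ∀ k l, k ≤ l → (f k).1.1 ⊆ (f l).1.1 := by
    intro k l hkl
    induction l, hkl using Nat.le_induction with
    | base => exact Finset.Subset.refl _
    | succ l hkl ih => exact ih.trans ((Finset.subset_insert _ _).trans (hstep l))
  have hbmem : ∀ k l, k < l → (f k).1.2 ∈ (f l).1.1 := by
    intro k l hkl
    exact hmono (k + 1) l hkl ((hstep k) (Finset.mem_insert_self _ _))
  have hndvd : ∀ k, n ∣ ((f k).1.2 : ℕ) :=
    fun k => (dvd_of_eq (f k).2.2.2).trans (Nat.gcd_dvd_left _ _)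
  have hgcdn : ∀ k l, k < l → Nat.gcd ((f k).1.2 : ℕ) ((f l).1.2 : ℕ) = n := by
    intro k l hkl
    apply Nat.dvd_antisymm
    · have h1 : Nat.gcd ((f k).1.2 : ℕ) ((f l).1.2 : ℕ) ∣
          Nat.gcd ((f l).1.2 : ℕ) (lcmS (f l).1.1) := by
        apply Nat.dvd_gcd (Nat.gcd_dvd_right _ _)
        exact (Nat.gcd_dvd_left _ _).trans (dvd_lcmS (hbmem k l hkl))
      exact h1.trans (dvd_of_eq (f l).2.2.2.symm)
    · exact Nat.dvd_gcd (hndvd k) (hndvd l)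
  have hn0 : n ≠ 0 := by
    intro h
    obtain ⟨c, hc⟩ := hndvd 0
    refine PNat.ne_zero ((f 0).1.2 : ℕ+) ?_
    rw [hc, h, Nat.zero_mul]
  set a : ℕ → ℕ := fun k => ((f k).1.2 : ℕ) / n with ha
  have hna : ∀ k, ((f k).1.2 : ℕ) = n * a k := fun k => (Nat.mul_div_cancel' (hndvd k)).symm
  have ha1 : ∀ k, 1 < a k := by
    intro k
    have h1 := hna k
    have h2 : ((f k).1.2 : ℕ) ≠ 0 := PNat.ne_zero _
    have h3 : ((f k).1.2 : ℕ) ≠ n := hnB _ (f k).2.2.1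
    rcases Nat.lt_or_ge (a k) 2 with h | h
    · interval_cases h' : (a k) <;> omega
    · omega
  have hcop : ∀ k l, k ≠ l → Nat.Coprime (a k) (a l) := by
    have key : ∀ k l, k < l → Nat.Coprime (a k) (a l) := by
      intro k l hkl
      have h1 : n * Nat.gcd (a k) (a l) = n * 1 := by
        rw [← Nat.gcd_mul_left, ← hna, ← hna, hgcdn k l hkl, mul_one]
      exact Nat.eq_of_mul_eq_mul_left (Nat.pos_of_ne_zero hn0) h1
    intro k l hkl
    rcases Nat.lt_or_ge k l with h | h
    · exact key k l h
    · exact (key l k (by omega)).symm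
  have hainj : Function.Injective a := by
    intro k l hkl
    by_contra hne2
    have := hcop k l hne2
    rw [hkl, Nat.Coprime, Nat.gcd_self] at this
    have := ha1 l
    omega
  refine ⟨n, Set.range a, Set.infinite_range_of_injective hainj, ?_, ?_, ?_⟩
  · rintro x ⟨k, rfl⟩; exact ha1 k
  · rintro x ⟨k, rfl⟩ y ⟨l, rfl⟩ hxy
    exact hcop k l (fun h => hxy (by rw [h]))
  · rintro x ⟨k, rfl⟩
    exact ⟨(f k).1.2, (f k).2.2.1, hna k⟩
lemma not_exists_dA_of_regular (hB : B.Infinite) (hprim : Primitive B)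
    (hreg : window B = closure (interior (window B))) :
    ¬ ∃ (d : ℕ) (A : Set ℕ), A.Infinite ∧ (∀ a ∈ A, 1 < a) ∧
        A.Pairwise Nat.Coprime ∧ (∀ a ∈ A, ∃ b ∈ B, (b : ℕ) = d * a) := by
  rintro ⟨d, A, hAinf, hA1, hAcop, hAB⟩
  classical
  obtain ⟨a₀, ha₀⟩ := hAinf.nonempty
  obtain ⟨b₀, hb₀B, hb₀⟩ := hAB a₀ ha₀
  have hd0 : d ≠ 0 := by
    intro h; rw [h, Nat.zero_mul] at hb₀; exact PNat.ne_zero b₀ hb₀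
  have hcop_ex : ∀ L : ℕ, L ≠ 0 → ∃ a ∈ A, Nat.Coprime a L := by
    intro L hL
    by_contra hc
    push_neg at hc
    have hsub : A ⊆ ⋃ p ∈ (L.primeFactors : Set ℕ), (A ∩ {a | p ∣ a}) := by
      intro a ha
      have hg : Nat.gcd a L ≠ 1 := hc a ha
      obtain ⟨q, hq, hqg⟩ := Nat.exists_prime_and_dvd hg
      refine Set.mem_biUnion ?_ ⟨ha, hqg.trans (Nat.gcd_dvd_left a L)⟩
      exact_mod_cast Nat.mem_primeFactors.2 ⟨hq, hqg.trans (Nat.gcd_dvd_right a L), hL⟩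
    have hfin : A.Finite := by
      refine Set.Finite.subset (Set.Finite.biUnion (L.primeFactors.finite_toSet) ?_) hsub
      intro q hqF
      apply Set.Subsingleton.finite
      intro x hx y hy
      by_contra hxy
      have hcxy : Nat.Coprime x y := hAcop hx.1 hy.1 hxy
      have hq : q.Prime := Nat.prime_of_mem_primeFactors (by exact_mod_cast hqF)
      have hdg : q ∣ Nat.gcd x y := Nat.dvd_gcd hx.2 hy.2
      rw [Nat.Coprime] at hcxy
      rw [hcxy] at hdg
      exact hq.one_lt.ne' (Nat.eq_one_of_dvd_one hdg)
    exact hAinf hfin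
  have hnd : ∀ b : ℕ+, b ∈ B → ¬ ((b : ℕ) ∣ d) := by
    intro b hbB hdvd
    obtain ⟨a₁, ha₁, a₂, ha₂, hne⟩ := hAinf.nontrivial
    obtain ⟨b₁, hb₁B, hb₁⟩ := hAB a₁ ha₁
    obtain ⟨b₂, hb₂B, hb₂⟩ := hAB a₂ ha₂
    have e1 : b = b₁ := hprim b hbB b₁ hb₁B (by rw [hb₁]; exact hdvd.trans (dvd_mul_right d a₁))
    have e2 : b = b₂ := hprim b hbB b₂ hb₂B (by rw [hb₂]; exact hdvd.trans (dvd_mul_right d a₂))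
    apply hne
    have heq : d * a₁ = d * a₂ := by rw [← hb₁, ← hb₂, ← e1, ← e2]
    exact Nat.eq_of_mul_eq_mul_left (Nat.pos_of_ne_zero hd0) heq
  have hE : ∀ n : ℤ, (d : ℤ) ∣ n → n ∉ Eset B := by
    intro n hdn hmem
    obtain ⟨T, hT⟩ := Set.mem_iUnion.1 hmem
    obtain ⟨hTB, hfree⟩ := Set.mem_iUnion.1 hT
    obtain ⟨a, haA, hacop⟩ := hcop_ex (lcmS T) (lcmS_ne_zero T)
    obtain ⟨b, hbB, hba⟩ := hAB a haA
    refine hfree (Nat.gcd ((b : ℕ)) (lcmS T)) ⟨b, hbB, rfl⟩ ?_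
    have hgg : Nat.gcd ((b : ℕ)) (lcmS T) = Nat.gcd d (lcmS T) := by
      rw [hba]; exact Nat.Coprime.gcd_mul_right_cancel d hacop
    rw [hgg]
    exact (Int.natCast_dvd_natCast.2 (Nat.gcd_dvd_left d (lcmS T))).trans hdn
  obtain ⟨T, hTB, hTmono, hTcov⟩ := exists_exhaustion hB
  choose p hpge hpprime using fun k => Nat.exists_infinite_primes (lcmS (T k) + 1)
  set u : ℕ → Hspace B := fun k => deltaH B ((d * p k : ℕ) : ℤ) with hu
  have hndvdk : ∀ k, ∀ b : ℕ+, b ∈ T k → ¬ ((b : ℕ) ∣ d * p k) := by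
    intro k b hbT hdvd
    have hble : (b : ℕ) ≤ lcmS (T k) :=
      Nat.le_of_dvd (Nat.pos_of_ne_zero (lcmS_ne_zero _)) (dvd_lcmS hbT)
    have hcop2 : Nat.Coprime (p k) (b : ℕ) :=
      ((hpprime k).coprime_iff_not_dvd).2 (fun hdl => by
        have := Nat.le_of_dvd b.pos hdl
        have := hpge k
        omega)
    exact hnd b (hTB k hbT) (Nat.Coprime.dvd_of_dvd_mul_right hcop2.symm hdvd)
  -- cluster point
  have hNB : (Filter.map u Filter.atTop).NeBot := Filter.map_neBot
  obtain ⟨h, -, hh⟩ := isCompact_univ.exists_clusterPt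
    (f := Filter.map u Filter.atTop) (by simp)
  have hmemC : ∀ C : Set (Hspace B), IsClosed C →
      (∀ᶠ k in Filter.atTop, u k ∈ C) → h ∈ C := by
    intro C hC hev
    rw [← hC.closure_eq, mem_closure_iff_clusterPt]
    exact hh.mono (Filter.le_principal_iff.2 (Filter.mem_map.2 hev))
  have hwin : h ∈ window B := by
    intro b
    have hcont : Continuous fun y : Hspace B => (y : Gspace B) b :=
      (continuous_apply b).comp continuous_subtype_val
    have hC : IsClosed {y : Hspace B | (y : Gspace B) b ≠ 0} :=
      (isClosed_discrete {x : ZMod (((b : ℕ+)) : ℕ) | x ≠ 0}).preimage hcont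
    have hsingle : ↑({(b : ℕ+)} : Finset ℕ+) ⊆ B := by
      intro x hx
      rw [Finset.coe_singleton, Set.mem_singleton_iff] at hx
      rw [hx]; exact b.2
    obtain ⟨k₀, hk₀⟩ := hTcov {(b : ℕ+)} hsingle
    have hev : ∀ᶠ k in Filter.atTop, u k ∈ {y : Hspace B | (y : Gspace B) b ≠ 0} := by
      filter_upwards [Filter.eventually_ge_atTop k₀] with k hk
      have hbT : (b : ℕ+) ∈ T k := (hk₀ k hk) (Finset.mem_singleton_self _)
      intro h0
      have h0' : ((((d * p k : ℕ) : ℤ)) : ZMod (((b : ℕ+)) : ℕ)) = 0 := h0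
      rw [ZMod.intCast_zmod_eq_zero_iff_dvd, Int.natCast_dvd_natCast] at h0'
      exact hndvdk k (b : ℕ+) hbT h0' 
    exact hmemC _ hC hev
  set i₀ : ↥B := ⟨b₀, hb₀B⟩ with hi₀
  have hC₀ : h ∈ {y : Hspace B | ∃ m : ℤ, (y : Gspace B) i₀ = ((d * m : ℤ) : ZMod ((b₀ : ℕ+) : ℕ))} := by
    refine hmemC _ ?_ ?_
    · have hcont : Continuous fun y : Hspace B => (y : Gspace B) i₀ :=
        (continuous_apply i₀).comp continuous_subtype_val
      exact (isClosed_discrete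
        {x : ZMod ((b₀ : ℕ+) : ℕ) | ∃ m : ℤ, x = ((d * m : ℤ) : ZMod ((b₀ : ℕ+) : ℕ))}).preimage hcont
    · filter_upwards with k
      refine ⟨(p k : ℤ), ?_⟩
      show ((((d * p k : ℕ) : ℤ)) : ZMod ((b₀ : ℕ+) : ℕ)) = _
      push_cast
      ring_nf
  obtain ⟨m₀, hm₀⟩ := hC₀
  -- conclude
  have hhcl : h ∈ closure (interior (window B)) := by rw [← hreg]; exact hwin
  have hcont : Continuous fun y : Hspace B => (y : Gspace B) i₀ :=
    (continuous_apply i₀).comp continuous_subtype_val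
  have hVopen : IsOpen {y : Hspace B | (y : Gspace B) i₀ = (h : Gspace B) i₀} :=
    (isOpen_discrete {(h : Gspace B) i₀}).preimage hcont
  obtain ⟨y, hyV, hyint⟩ := mem_closure_iff.1 hhcl _ hVopen rfl
  have hOne : (interior (window B) ∩
      {y : Hspace B | (y : Gspace B) i₀ = (h : Gspace B) i₀}).Nonempty := ⟨y, hyint, hyV⟩
  obtain ⟨z, ⟨n, rfl⟩, hzO⟩ :=
    denseRange_deltaH.exists_mem_open (isOpen_interior.inter hVopen) hOne
  have hnE : n ∈ Eset B := mem_Eset_of_interior hzO.1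
  have hcoord : ((n : ℤ) : ZMod ((b₀ : ℕ+) : ℕ)) = ((d * m₀ : ℤ) : ZMod ((b₀ : ℕ+) : ℕ)) := by
    have h1 : (deltaH B n : Gspace B) i₀ = (h : Gspace B) i₀ := hzO.2
    rw [hm₀] at h1
    exact h1
  have hdvd1 : (((b₀ : ℕ+) : ℕ) : ℤ) ∣ (d * m₀ - n) := by
    rw [ZMod.intCast_eq_intCast_iff] at hcoord
    exact Int.ModEq.dvd hcoord
  have hdb₀ : (d : ℤ) ∣ (((b₀ : ℕ+) : ℕ) : ℤ) := by
    refine ⟨(a₀ : ℤ), ?_⟩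
    exact_mod_cast hb₀
  have hdn : (d : ℤ) ∣ n := by
    have h1 : (d : ℤ) ∣ (d * m₀ - n) := hdb₀.trans hdvd1
    have h2 : (d : ℤ) ∣ (d * m₀) := dvd_mul_right _ _
    have h3 : (n : ℤ) = d * m₀ - (d * m₀ - n) := by ring
    rw [h3]
    exact dvd_sub h2 h1
  exact hE n hdn hnE
lemma interior_of_mem_Eset {n : ℤ} (hn : n ∈ Eset B) : deltaH B n ∈ interior (window B) := by
  classical
  obtain ⟨T, hT⟩ := Set.mem_iUnion.1 hn
  obtain ⟨hTB, hfree⟩ := Set.mem_iUnion.1 hT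
  set F : Finset ↥B := T.attach.image (fun x => (⟨x.1, hTB x.2⟩ : ↥B)) with hF
  apply mem_interior.2
  refine ⟨{y : Hspace B | ∀ i ∈ F, (y : Gspace B) i = (deltaH B n : Gspace B) i}, ?_,
    isOpen_cyl F _, fun i _ => rfl⟩
  intro y hy b
  by_contra h0
  obtain ⟨m, hm⟩ := exists_match y (insert b F)
  have hbm : (((b : ℕ+) : ℕ) : ℤ) ∣ m := by
    have h1 : (y : Gspace B) b = ((m : ℤ) : ZMod ((b : ℕ+) : ℕ)) :=
      hm b (Finset.mem_insert_self _ _)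
    rw [h0] at h1
    exact (ZMod.intCast_zmod_eq_zero_iff_dvd m _).1 h1.symm
  have hmn : ∀ t, t ∈ T → ((t : ℕ) : ℤ) ∣ (m - n) := by
    intro t ht
    have hiF : (⟨(t : ℕ+), hTB ht⟩ : ↥B) ∈ F :=
      Finset.mem_image.2 ⟨⟨t, ht⟩, Finset.mem_attach _ _, rfl⟩
    have h1 : (y : Gspace B) ⟨t, hTB ht⟩ = ((m : ℤ) : ZMod ((t : ℕ+) : ℕ)) :=
      hm _ (Finset.mem_insert_of_mem hiF)
    have h2 : (y : Gspace B) ⟨t, hTB ht⟩ = ((n : ℤ) : ZMod ((t : ℕ+) : ℕ)) := hy _ hiF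
    have h3 : ((n : ℤ) : ZMod ((t : ℕ+) : ℕ)) = ((m : ℤ) : ZMod ((t : ℕ+) : ℕ)) :=
      h2.symm.trans h1
    rw [ZMod.intCast_eq_intCast_iff] at h3
    exact Int.ModEq.dvd h3
  have hlcm : ((lcmS T : ℕ) : ℤ) ∣ (m - n) := by
    rw [Int.natCast_dvd]
    exact Finset.lcm_dvd fun t ht => Int.natCast_dvd.1 (hmn t ht)
  refine hfree (Nat.gcd ((b : ℕ+) : ℕ) (lcmS T)) ⟨(b : ℕ+), b.2, rfl⟩ ?_
  have h1 : ((Nat.gcd ((b : ℕ+) : ℕ) (lcmS T) : ℕ) : ℤ) ∣ m :=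
    dvd_trans (Int.natCast_dvd_natCast.2 (Nat.gcd_dvd_left _ _)) hbm
  have h2 : ((Nat.gcd ((b : ℕ+) : ℕ) (lcmS T) : ℕ) : ℤ) ∣ (m - n) :=
    dvd_trans (Int.natCast_dvd_natCast.2 (Nat.gcd_dvd_right _ _)) hlcm
  have h3 : (n : ℤ) = m - (m - n) := by ring
  rw [h3]
  exact dvd_sub h1 h2

lemma ainfty_nonempty_of_not_regular (hB : B.Infinite)
    (hne : window B ≠ closure (interior (window B))) : (Ainfty B).Nonempty := by
  classical
  have hclsub : closure (interior (window B)) ⊆ window B :=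
    closure_minimal interior_subset isClosed_window
  obtain ⟨h, hhW, hhncl⟩ := Set.exists_of_ssubset (hclsub.ssubset_of_ne (fun e => hne e.symm))
  have hVmem : (closure (interior (window B)))ᶜ ∈ 𝓝 h :=
    (isClosed_closure.isOpen_compl).mem_nhds hhncl
  obtain ⟨F, hF⟩ := exists_cyl_subset hVmem
  set S : Finset ℕ+ := F.image (fun i : ↥B => i.1) with hS
  have hSB : ↑S ⊆ B := by
    intro b hb
    rw [hS, Finset.coe_image] at hb
    obtain ⟨i, -, rfl⟩ := hb
    exact i.2
  set L : ℕ := lcmS S with hLdef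
  have hL0 : L ≠ 0 := lcmS_ne_zero S
  obtain ⟨n₀, hn₀⟩ := exists_match h F
  have hnotE : ∀ n : ℤ, n ≡ n₀ [ZMOD (L : ℤ)] → n ∉ Eset B := by
    intro n hmod hmem
    have hcylmem : deltaH B n ∈
        {y : Hspace B | ∀ i ∈ F, (y : Gspace B) i = (h : Gspace B) i} := by
      intro i hi
      have hdl : (((i : ℕ+)) : ℕ) ∣ L := dvd_lcmS (Finset.mem_image.2 ⟨i, hi, rfl⟩)
      have hcast : ((n : ℤ) : ZMod (((i : ℕ+)) : ℕ)) = ((n₀ : ℤ) : ZMod (((i : ℕ+)) : ℕ)) := by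
        rw [ZMod.intCast_eq_intCast_iff]
        exact hmod.of_dvd (Int.natCast_dvd_natCast.2 hdl)
      show ((n : ℤ) : ZMod (((i : ℕ+)) : ℕ)) = (h : Gspace B) i
      rw [hcast, ← hn₀ i hi]
    exact (hF hcylmem) (subset_closure (interior_of_mem_Eset hmem))
  obtain ⟨T, hTB, hTmono, hTcov⟩ := exists_exhaustion hB
  set T' : ℕ → Finset ℕ+ := fun k => S ∪ T k with hT'
  have hT'B : ∀ k, ↑(T' k) ⊆ B := by
    intro k x hx
    rw [hT'] at hx
    simp only [Finset.coe_union, Set.mem_union, Finset.mem_coe] at hx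
    rcases hx with hx | hx
    · exact hSB hx
    · exact hTB k hx
  have hLd : ∀ k, L ∣ lcmS (T' k) := fun k => lcmS_dvd_lcmS Finset.subset_union_left
  choose nn hnmod hnc using fun k => crt_trick L (lcmS (T' k)) hL0 (lcmS_ne_zero _) n₀
  choose c hc1 hc2 using fun k => (not_mem_Eset_iff.1 (hnotE (nn k) (hnmod k))) (T' k) (hT'B k)
  have hcL : ∀ k, c k ∣ L := by
    intro k
    obtain ⟨b, hbB, hcg⟩ := hc1 k
    refine hnc k (c k) ?_ (hc2 k)
    rw [hcg]
    exact Nat.gcd_dvd_right _ _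
  have hcb : ∀ k, c k ≤ L := fun k => Nat.le_of_dvd (Nat.pos_of_ne_zero hL0) (hcL k)
  obtain ⟨m, -, hK⟩ := exists_infinite_constant hcb
  refine ⟨m, fun S₀ hS₀ => ?_⟩
  obtain ⟨k₀, hk₀⟩ := hTcov S₀ hS₀
  obtain ⟨k, hkK, hkgt⟩ := hK.exists_gt k₀
  have hck : c k = m := hkK
  refine ⟨T' k, ?_, hT'B k, hck ▸ hc1 k, ?_⟩
  · exact (hk₀ k (le_of_lt hkgt)).trans Finset.subset_union_right
  · intro q hqT' heq
    have hqB : q ∈ B := hT'B k hqT'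
    have hmL : m ∣ L := hck ▸ hcL k
    have hmn : ((m : ℕ) : ℤ) ∣ nn k := hck ▸ hc2 k
    obtain ⟨n₁, hn₁⟩ := exists_match h (insert ⟨q, hqB⟩ F)
    have hq1 : ¬ (((q : ℕ)) : ℤ) ∣ n₁ := by
      have hcoord : (h : Gspace B) ⟨q, hqB⟩ = ((n₁ : ℤ) : ZMod ((q : ℕ+) : ℕ)) :=
        hn₁ _ (Finset.mem_insert_self _ _)
      intro hdvd
      apply hhW ⟨q, hqB⟩
      rw [hcoord]
      exact (ZMod.intCast_zmod_eq_zero_iff_dvd n₁ _).2 hdvd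
    have hmod1 : ((L : ℕ) : ℤ) ∣ (n₁ - n₀) := by
      rw [Int.natCast_dvd]
      apply Finset.lcm_dvd
      intro t htS
      rw [← Int.natCast_dvd]
      obtain ⟨i, hiF, hit⟩ := Finset.mem_image.1 htS
      have h1 : (h : Gspace B) i = ((n₁ : ℤ) : ZMod (((i : ℕ+)) : ℕ)) :=
        hn₁ i (Finset.mem_insert_of_mem hiF)
      have h2 : (h : Gspace B) i = ((n₀ : ℤ) : ZMod (((i : ℕ+)) : ℕ)) := hn₀ i hiF
      have h3 : ((n₀ : ℤ) : ZMod (((i : ℕ+)) : ℕ)) = ((n₁ : ℤ) : ZMod (((i : ℕ+)) : ℕ)) :=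
        h2.symm.trans h1
      rw [ZMod.intCast_eq_intCast_iff] at h3
      rw [← hit]
      exact Int.ModEq.dvd h3
    have hA : ((m : ℕ) : ℤ) ∣ ((L : ℕ) : ℤ) := Int.natCast_dvd_natCast.2 hmL
    have h5 : ((L : ℕ) : ℤ) ∣ (n₀ - nn k) := Int.ModEq.dvd (hnmod k)
    have h6 : ((m : ℕ) : ℤ) ∣ n₀ := by
      have he : (n₀ : ℤ) = (n₀ - nn k) + nn k := by ring
      rw [he]
      exact dvd_add (hA.trans h5) hmn
    have h7 : ((m : ℕ) : ℤ) ∣ (n₁ - n₀) := hA.trans hmod1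
    have hmn₁ : ((m : ℕ) : ℤ) ∣ n₁ := by
      have he : (n₁ : ℤ) = (n₁ - n₀) + n₀ := by ring
      rw [he]
      exact dvd_add h7 h6
    apply hq1
    rw [heq]
    exact hmn₁
end Aux

/-- For an infinite primitive set `B` of positive integers the following are
equivalent: (i) the window is topologically regular; (ii) there are no `d ∈ ℕ` and no
infinite pairwise coprime `A ⊆ ℕ ∖ {1}` with `d·A ⊆ B`; (iii) `A_∞ = ∅`; (iv) `E = F_B`. -/
theorem statement3 (B : Set ℕ+) (hB : B.Infinite) (hprim : Primitive B) :
    List.TFAE [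
      window B = closure (interior (window B)),
      ¬ ∃ (d : ℕ) (A : Set ℕ), A.Infinite ∧ (∀ a ∈ A, 1 < a) ∧
          A.Pairwise Nat.Coprime ∧ (∀ a ∈ A, ∃ b ∈ B, (b : ℕ) = d * a),
      Ainfty B = ∅,
      Eset B = FreeSet B ] := by
  tfae_have 1 → 2 := fun h1 => not_exists_dA_of_regular hB hprim h1
  tfae_have 2 → 3 := by
    intro h2
    by_contra h3
    obtain ⟨n, hn⟩ := Set.nonempty_iff_ne_empty.2 h3
    exact h2 (exists_dA hprim hn)
  tfae_have 3 → 4 := by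
    intro h3
    by_contra h4
    obtain ⟨m, hm⟩ := ainfty_nonempty_of_ne hB h4
    rw [h3] at hm
    exact Set.notMem_empty m hm
  tfae_have 4 → 3 := by
    intro h4
    rw [Set.eq_empty_iff_forall_notMem]
    intro n hn
    obtain ⟨hFr, hEs⟩ := freeset_diff_eset_of_ainfty hprim hn
    rw [h4] at hEs
    exact hEs hFr
  tfae_have 3 → 1 := by
    intro h3
    by_contra h1
    obtain ⟨m, hm⟩ := ainfty_nonempty_of_not_regular hB h1
    rw [h3] at hm
    exact Set.notMem_empty m hm
  tfae_finish

end BFree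
end

section
/- If B is an infinite primitive set of positive integers and η is a Toeplitz sequence, then B is taut. -/
open Set MeasureTheory Filter Topology

namespace BFree

lemma densSeq_nonneg (M : Set ℤ) (N : ℕ) : 0 ≤ densSeq M N := by
  unfold densSeq; positivity

lemma card_eq_ncard (M : Set ℤ) (N : ℕ) :
    (Nat.card ↥(M ∩ Set.Icc (1 : ℤ) (N : ℤ))) = (M ∩ Set.Icc (1 : ℤ) (N : ℤ)).ncard :=
  Nat.card_coe_set_eq _

lemma densSeq_le_one (M : Set ℤ) (N : ℕ) : densSeq M N ≤ 1 := by
  unfold densSeq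
  rcases Nat.eq_zero_or_pos N with h | h
  · simp [h]
  · rw [div_le_one (by exact_mod_cast h)]
    have : (Nat.card ↥(M ∩ Set.Icc (1 : ℤ) (N : ℤ))) ≤ N := by
      rw [card_eq_ncard]
      calc (M ∩ Set.Icc (1:ℤ) N).ncard ≤ (Set.Icc (1:ℤ) N).ncard :=
            Set.ncard_le_ncard inter_subset_right (finite_Icc _ _)
        _ = N := by rw [← Finset.coe_Icc, Set.ncard_coe_finset, Int.card_Icc]; simp
    exact_mod_cast this

lemma liminf_ge_add (u v : ℕ → ℝ) (c : ℝ)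
    (hu1 : ∀ n, u n ≤ 1) (hv0 : ∀ n, 0 ≤ v n) (hv1 : ∀ n, v n ≤ 1)
    (h : ∀ᶠ n in atTop, v n + c ≤ u n) :
    liminf v atTop + c ≤ liminf u atTop := by
  have hvcob : IsCoboundedUnder (· ≥ ·) atTop v :=
    Filter.IsBoundedUnder.isCoboundedUnder_ge (isBoundedUnder_of ⟨1, hv1⟩)
  have hucob : IsCoboundedUnder (· ≥ ·) atTop u :=
    Filter.IsBoundedUnder.isCoboundedUnder_ge (isBoundedUnder_of ⟨1, hu1⟩)
  have hvbdd : IsBoundedUnder (· ≥ ·) atTop v := isBoundedUnder_of ⟨0, hv0⟩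
  have key : ∀ a, a < liminf v atTop → a + c ≤ liminf u atTop := by
    intro a ha
    have h1 : ∀ᶠ n in atTop, a < v n := eventually_lt_of_lt_liminf ha hvbdd
    have h2 : ∀ᶠ n in atTop, a + c ≤ u n := by
      filter_upwards [h1, h] with n h1n h2n
      linarith
    exact le_liminf_of_le hucob h2
  by_contra hcon
  push_neg at hcon
  have h3 : liminf u atTop - c < liminf v atTop := by linarith
  obtain ⟨a, ha1, ha2⟩ := exists_between h3
  have := key a ha2
  linarith

lemma ap_count (b L : ℕ) (hb : 0 < b) (hbL : b ≤ L) (hL : 0 < L) (N : ℕ) (hN : 2*L ≤ N) :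
    (N : ℝ) / (2*L) ≤ (({x : ℤ | ∃ j : ℤ, x = (b:ℤ) + j * (L:ℤ)} ∩ Set.Icc (1:ℤ) N).ncard : ℝ) := by
  set K : ℕ := N / L with hK
  have hKL : K * L ≤ N := Nat.div_mul_le_self N L
  have hNlt : N < K * L + L := by
    calc N = L * K + N % L := (Nat.div_add_mod N L).symm
      _ < L * K + L := by have := Nat.mod_lt N hL; omega
      _ = K * L + L := by ring
  set F : Finset ℤ := (Finset.range K).image (fun i : ℕ => (b:ℤ) + i * L) with hF
  have hLZ : (0:ℤ) < (L:ℤ) := by exact_mod_cast hL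
  have hcard : F.card = K := by
    rw [hF, Finset.card_image_of_injective, Finset.card_range]
    intro i j hij
    have hij' : (b:ℤ) + i * L = (b:ℤ) + j * L := hij
    have h2 : (i:ℤ) * L = (j:ℤ) * L := by linarith
    have h3 : (i:ℤ) = (j:ℤ) := mul_right_cancel₀ (ne_of_gt hLZ) h2
    exact_mod_cast h3
  have hsub : (F : Set ℤ) ⊆ {x : ℤ | ∃ j : ℤ, x = (b:ℤ) + j * (L:ℤ)} ∩ Set.Icc (1:ℤ) N := by
    intro x hx
    simp only [hF, Finset.coe_image, Finset.coe_range] at hx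
    obtain ⟨i, hi, rfl⟩ := hx
    have hiK : i < K := Set.mem_Iio.mp hi
    refine ⟨⟨(i:ℤ), rfl⟩, ?_, ?_⟩
    · show (1:ℤ) ≤ (b:ℤ) + i * L
      have h0 : (0:ℤ) ≤ (i:ℤ) * L := by positivity
      have hb' : (1:ℤ) ≤ (b:ℤ) := by exact_mod_cast hb
      linarith
    · show (b:ℤ) + i * L ≤ (N:ℤ)
      have h1 : (i:ℤ) + 1 ≤ (K:ℤ) := by exact_mod_cast hiK
      have h2 : (K:ℤ) * L ≤ (N:ℤ) := by exact_mod_cast hKL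
      have hb' : (b:ℤ) ≤ (L:ℤ) := by exact_mod_cast hbL
      nlinarith
  have hfin : ({x : ℤ | ∃ j : ℤ, x = (b:ℤ) + j * (L:ℤ)} ∩ Set.Icc (1:ℤ) N).Finite :=
    (Set.finite_Icc _ _).subset inter_subset_right
  have hge : K ≤ ({x : ℤ | ∃ j : ℤ, x = (b:ℤ) + j * (L:ℤ)} ∩ Set.Icc (1:ℤ) N).ncard := by
    calc K = F.card := hcard.symm
      _ = (F : Set ℤ).ncard := (Set.ncard_coe_finset F).symm
      _ ≤ _ := Set.ncard_le_ncard hsub hfin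
  have hge' : (K:ℝ) ≤ (({x : ℤ | ∃ j : ℤ, x = (b:ℤ) + j * (L:ℤ)} ∩ Set.Icc (1:ℤ) N).ncard : ℝ) := by
    exact_mod_cast hge
  refine le_trans ?_ hge'
  rw [div_le_iff₀ (by positivity)]
  have hx1 : (N:ℝ) < K * L + L := by exact_mod_cast hNlt
  have hx2 : (2*L:ℝ) ≤ (N:ℝ) := by exact_mod_cast hN
  nlinarith

/-- If `B` is an infinite primitive set of positive integers and `η` is a
Toeplitz sequence, then `B` is taut. -/
theorem statement5 (B : Set ℕ+) (hB : B.Infinite) (hprim : Primitive B)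
    (htoeplitz : ∀ n : ℤ, ∃ m : ℕ, 0 < m ∧ ∀ j : ℤ, eta B (n + j * m) = eta B n) :
    Taut B := by
  intro b₀ hb₀
  classical
  choose M hMpos hM using htoeplitz
  -- every proper divisor of b₀ is B-free
  have hfree : ∀ d : ℕ, d ∣ (b₀:ℕ) → d ≠ (b₀:ℕ) → (d:ℤ) ∈ FreeSet B := by
    intro d hdvd hne b hb hbd
    have hbd' : (b:ℕ) ∣ d := by exact_mod_cast hbd
    have hbb : b = b₀ := hprim b hb b₀ hb₀ (hbd'.trans hdvd)
    subst hbb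
    exact hne (Nat.dvd_antisymm hdvd hbd')
  -- for every b ∈ B and proper divisor d of b₀:  gcd(b, M d) ∤ d
  have hgcdnd : ∀ b : ℕ+, b ∈ B → ∀ d : ℕ, d ∣ (b₀:ℕ) → d ≠ (b₀:ℕ) →
      ¬ (Nat.gcd (b:ℕ) (M (d:ℤ)) ∣ d) := by
    intro b hb d hdvd hne hg
    set m := M (d:ℤ) with hm
    obtain ⟨t, ht⟩ := hg
    set A := Int.gcdA ((b:ℕ):ℤ) (m:ℤ) with hA
    set Bz := Int.gcdB ((b:ℕ):ℤ) (m:ℤ) with hBz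
    have hbez : ((Nat.gcd (b:ℕ) m : ℕ) : ℤ) = ((b:ℕ):ℤ) * A + (m:ℤ) * Bz := by
      have h1 := Int.gcd_eq_gcd_ab ((b:ℕ):ℤ) (m:ℤ)
      have h2 : Int.gcd ((b:ℕ):ℤ) (m:ℤ) = Nat.gcd (b:ℕ) m := Int.gcd_natCast_natCast _ _
      rw [← h2]
      exact h1
    set j : ℤ := -(Bz * (t:ℤ)) with hj
    have hdvdx : ((b:ℕ):ℤ) ∣ ((d:ℤ) + j * (m:ℤ)) := by
      refine ⟨A * t, ?_⟩
      have htZ : (d:ℤ) = ((Nat.gcd (b:ℕ) m : ℕ):ℤ) * (t:ℤ) := by exact_mod_cast ht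
      rw [htZ, hbez, hj]; ring
    have h3 : eta B ((d:ℤ) + j * (m:ℤ)) = eta B (d:ℤ) := hM (d:ℤ) j
    have h4 : eta B (d:ℤ) = true := by
      simp only [eta, decide_eq_true_eq]
      exact hfree d hdvd hne
    rw [h4] at h3
    simp only [eta, decide_eq_true_eq] at h3
    exact h3 b hb hdvdx
  -- the period L
  set L : ℕ := (b₀:ℕ) * ∏ d ∈ (b₀:ℕ).properDivisors, M (d:ℤ) with hLdef
  have hprodpos : 0 < ∏ d ∈ (b₀:ℕ).properDivisors, M (d:ℤ) :=
    Finset.prod_pos (fun d _ => hMpos _)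
  have hLpos : 0 < L := Nat.mul_pos b₀.pos hprodpos
  have hb₀L : (b₀:ℕ) ∣ L := dvd_mul_right _ _
  have hb₀leL : (b₀:ℕ) ≤ L := Nat.le_of_dvd hLpos hb₀L
  set P : Set ℤ := {x : ℤ | ∃ j : ℤ, x = ((b₀:ℕ):ℤ) + j * (L:ℤ)} with hP
  have hPsubM : P ⊆ MultSet B := by
    rintro x ⟨j, rfl⟩
    exact ⟨b₀, hb₀, dvd_add dvd_rfl ((Int.natCast_dvd_natCast.mpr hb₀L).mul_left j)⟩
  -- the AP avoids all other elements of B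
  have hPdisj : ∀ x ∈ P, ∀ b : ℕ+, b ∈ B → b ≠ b₀ → ¬ ((b:ℕ):ℤ) ∣ x := by
    rintro x ⟨j, rfl⟩ b hb hne hdvd
    set d : ℕ := Nat.gcd (b:ℕ) (b₀:ℕ) with hd
    have hdd : d ∣ (b₀:ℕ) := Nat.gcd_dvd_right _ _
    have hdne : d ≠ (b₀:ℕ) := by
      intro h
      have hdl : (b₀:ℕ) ∣ (b:ℕ) := h ▸ Nat.gcd_dvd_left _ _
      exact hne (hprim b₀ hb₀ b hb hdl).symm
    have hdltb : d < (b₀:ℕ) := lt_of_le_of_ne (Nat.le_of_dvd b₀.pos hdd) hdne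
    have hdmem : d ∈ (b₀:ℕ).properDivisors := Nat.mem_properDivisors.mpr ⟨hdd, hdltb⟩
    set g : ℕ := Nat.gcd (b:ℕ) (M (d:ℤ)) with hg
    have hgL : g ∣ L :=
      dvd_mul_of_dvd_right ((Nat.gcd_dvd_right _ _).trans (Finset.dvd_prod_of_mem _ hdmem)) _
    have hgx : ((g:ℕ):ℤ) ∣ (((b₀:ℕ):ℤ) + j * (L:ℤ)) :=
      (Int.natCast_dvd_natCast.mpr (Nat.gcd_dvd_left _ _)).trans hdvd
    have hgjL : ((g:ℕ):ℤ) ∣ j * (L:ℤ) := (Int.natCast_dvd_natCast.mpr hgL).mul_left j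
    have hgb₀ : ((g:ℕ):ℤ) ∣ ((b₀:ℕ):ℤ) := by
      have hsub := dvd_sub hgx hgjL
      simpa using hsub
    have hgb₀' : g ∣ (b₀:ℕ) := Int.natCast_dvd_natCast.mp hgb₀
    have hgd : g ∣ d := Nat.dvd_gcd (Nat.gcd_dvd_left _ _) hgb₀'
    exact hgcdnd b hb d hdd hdne hgd
  have hM'subM : MultSet (B \ {b₀}) ⊆ MultSet B := by
    rintro x ⟨b, hb, hdvd⟩
    exact ⟨b, hb.1, hdvd⟩
  -- eventual density inequality
  have hev : ∀ᶠ N in atTop,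
      densSeq (MultSet (B \ {b₀})) N + 1/(2*(L:ℝ)) ≤ densSeq (MultSet B) N := by
    rw [eventually_atTop]
    refine ⟨2*L, fun N hN => ?_⟩
    have hNpos : 0 < N := lt_of_lt_of_le (by positivity) hN
    have hfin : (Set.Icc (1:ℤ) (N:ℤ)).Finite := Set.finite_Icc _ _
    set S1 := MultSet (B \ {b₀}) ∩ Set.Icc (1:ℤ) (N:ℤ) with hS1
    set S2 := P ∩ Set.Icc (1:ℤ) (N:ℤ) with hS2
    set S := MultSet B ∩ Set.Icc (1:ℤ) (N:ℤ) with hS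
    have hfin1 : S1.Finite := hfin.subset inter_subset_right
    have hfin2 : S2.Finite := hfin.subset inter_subset_right
    have hfinS : S.Finite := hfin.subset inter_subset_right
    have hdisj : Disjoint S1 S2 := by
      rw [Set.disjoint_left]
      rintro x ⟨hxM, _⟩ ⟨hxP, _⟩
      obtain ⟨b, hb, hdvd⟩ := hxM
      exact hPdisj x hxP b hb.1 (fun h => hb.2 (by simp [h])) hdvd
    have hunion : S1 ∪ S2 ⊆ S :=
      Set.union_subset (inter_subset_inter_left _ hM'subM) (inter_subset_inter_left _ hPsubM)
    have hcard : S1.ncard + S2.ncard ≤ S.ncard := by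
      rw [← Set.ncard_union_eq hdisj hfin1 hfin2]
      exact Set.ncard_le_ncard hunion hfinS
    have h2 := ap_count (b₀:ℕ) L b₀.pos hb₀leL hLpos N hN
    -- translate densSeq to ncard
    have e1 : densSeq (MultSet (B \ {b₀})) N = (S1.ncard : ℝ) / N := by
      rw [densSeq, card_eq_ncard]
    have e2 : densSeq (MultSet B) N = (S.ncard : ℝ) / N := by
      rw [densSeq, card_eq_ncard]
    rw [e1, e2]
    have hnR : (0:ℝ) < N := by exact_mod_cast hNpos
    have hlR : (0:ℝ) < (L:ℝ) := by exact_mod_cast hLpos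
    have h2' : (N:ℝ) ≤ (S2.ncard : ℝ) * (2*L) := by
      rw [div_le_iff₀ (by positivity)] at h2
      convert h2 using 2
    have hcard' : (S1.ncard : ℝ) + (S2.ncard : ℝ) ≤ (S.ncard : ℝ) := by exact_mod_cast hcard
    have hs2 : 1/(2*(L:ℝ)) ≤ (S2.ncard:ℝ)/N := by
      rw [div_le_div_iff₀ (by positivity) hnR]
      linarith [h2']
    have hdivsum : (S1.ncard:ℝ)/N + (S2.ncard:ℝ)/N ≤ (S.ncard:ℝ)/N := by
      rw [← add_div]
      gcongr
    linarith
  have hineq := liminf_ge_add (densSeq (MultSet B)) (densSeq (MultSet (B \ {b₀})))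
      (1/(2*(L:ℝ))) (fun n => densSeq_le_one _ n) (fun n => densSeq_nonneg _ n)
      (fun n => densSeq_le_one _ n) hev
  have hc : 0 < 1/(2*(L:ℝ)) := by positivity
  show lowerDensity (MultSet (B \ {b₀})) < lowerDensity (MultSet B)
  unfold lowerDensity
  linarith


end BFree
end

section
/- Let B be an infinite primitive set of positive integers and suppose the window W is topologically regular, i.e., W equals the closure of its interior in H. Then the subshift (X_η, σ) is minimal (the orbit closure of every point of X_η equals X_η) and X_η has more than one element. -/
open Set MeasureTheory Filter Topology

namespace BFree

lemma shift_shift (k j : ℤ) (x : ℤ → Bool) : shift k (shift j x) = shift (j + k) x := by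
  funext n; simp [shift, add_assoc, add_comm j k]

lemma continuous_shift (k : ℤ) : Continuous (shift k) :=
  continuous_pi fun n => continuous_apply (n + k)

/-- Closure in the product space `ℤ → Bool` via finite agreement. -/
lemma mem_closure_iff_finset (S : Set (ℤ → Bool)) (x : ℤ → Bool) :
    x ∈ closure S ↔ ∀ F : Finset ℤ, ∃ y ∈ S, ∀ i ∈ F, y i = x i := by
  constructor
  · intro hx F
    have hopen : IsOpen ((F : Set ℤ).pi fun i => {x i}) :=
      isOpen_set_pi F.finite_toSet fun a _ => isOpen_discrete _
    have hxmem : x ∈ (F : Set ℤ).pi fun i => {x i} := fun i _ => rfl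
    obtain ⟨y, hy1, hy2⟩ := mem_closure_iff.mp hx _ hopen hxmem
    exact ⟨y, hy2, fun i hi => hy1 i hi⟩
  · intro h
    rw [mem_closure_iff]
    intro o ho hxo
    obtain ⟨I, u, hIu, hsub⟩ := isOpen_pi_iff.mp ho x hxo
    obtain ⟨y, hyS, hy⟩ := h I
    refine ⟨y, hsub fun i hi => ?_, hyS⟩
    rw [hy i hi]; exact (hIu i hi).2

def orbit (x : ℤ → Bool) : Set (ℤ → Bool) := {y | ∃ k : ℤ, y = shift k x}

lemma shift_mem_orbitClosure {x z : ℤ → Bool} (k : ℤ) (hz : z ∈ closure (orbit x)) :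
    shift k z ∈ closure (orbit x) := by
  have h1 : shift k z ∈ closure (shift k '' orbit x) := by
    exact image_closure_subset_closure_image (continuous_shift k) (Set.mem_image_of_mem _ hz)
  refine closure_mono ?_ h1
  rintro - ⟨y, ⟨j, rfl⟩, rfl⟩
  exact ⟨j + k, by rw [shift_shift]⟩

lemma orbitClosure_subset {x z : ℤ → Bool} (hz : z ∈ closure (orbit x)) :
    closure (orbit z) ⊆ closure (orbit x) := by
  refine closure_minimal ?_ isClosed_closure
  rintro - ⟨k, rfl⟩
  exact shift_mem_orbitClosure k hz

variable {B : Set ℕ+}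

lemma deltaH_coe (B : Set ℕ+) (m : ℤ) (b : B) :
    ((deltaH B m : Hspace B) : Gspace B) b = ((m : ℤ) : ZMod ((b : ℕ+) : ℕ)) := rfl

/-- membership in window via FreeSet -/
lemma deltaH_mem_window_iff (B : Set ℕ+) (n : ℤ) :
    deltaH B n ∈ window B ↔ n ∈ FreeSet B := by
  constructor
  · intro h b hb hdvd
    exact h ⟨b, hb⟩ ((ZMod.intCast_zmod_eq_zero_iff_dvd n (b : ℕ)).mpr hdvd)
  · intro h b h0
    exact h b b.2 ((ZMod.intCast_zmod_eq_zero_iff_dvd n ((b : ℕ+) : ℕ)).mp h0)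

/-- Cylinder neighborhood basis: every open set containing `h` contains a cylinder. -/
lemma exists_cyl_subset_s6 {U : Set (Hspace B)} (hU : IsOpen U) {h : Hspace B} (hh : h ∈ U) :
    ∃ I : Finset B, {h' : Hspace B | ∀ b ∈ I, (h' : Gspace B) b = (h : Gspace B) b} ⊆ U := by
  obtain ⟨V, hV, rfl⟩ := isOpen_induced_iff.mp hU
  obtain ⟨I, u, hIu, hsub⟩ := isOpen_pi_iff.mp hV (h : Gspace B) hh
  refine ⟨I, fun h' hh' => ?_⟩
  refine hsub fun b hb => ?_
  rw [hh' b hb]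
  exact (hIu b hb).2

/-- Density of `Δ(ℤ)`: approximation on any finite set of coordinates. -/
lemma exists_delta_close (h : Hspace B) (I : Finset B) :
    ∃ m : ℤ, ∀ b ∈ I, ((deltaH B m : Hspace B) : Gspace B) b = (h : Gspace B) b := by
  have hcl : (h : Gspace B) ∈ closure (Set.range (delta B)) := by
    have h2 : (h : Gspace B) ∈ closure (((delta B).range : AddSubgroup (Gspace B)) : Set (Gspace B)) := h.2
    simpa using h2
  have hopen : IsOpen ((I : Set B).pi fun b => {(h : Gspace B) b}) :=
    isOpen_set_pi I.finite_toSet fun a _ => isOpen_discrete _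
  have hmem : (h : Gspace B) ∈ (I : Set B).pi fun b => {(h : Gspace B) b} := fun b _ => rfl
  obtain ⟨g, hg1, m, rfl⟩ := mem_closure_iff.mp hcl _ hopen hmem
  exact ⟨m, fun b hb => hg1 b hb⟩


lemma lcmS_pos (S : Finset ℕ+) : 0 < lcmS S := by
  rw [Nat.pos_iff_ne_zero]
  intro h
  rw [lcmS, Finset.lcm_eq_zero_iff] at h
  obtain ⟨b, _, hb⟩ := h
  exact b.ne_zero hb

lemma solvable (b L m : ℤ) (h : (Int.gcd b L : ℤ) ∣ m) : ∃ x : ℤ, b ∣ m + x * L := by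
  obtain ⟨c, hc⟩ := h
  refine ⟨-(c * Int.gcdB b L), ⟨Int.gcdA b L * c, ?_⟩⟩
  rw [hc]
  linear_combination c * Int.gcd_eq_gcd_ab b L

lemma isOpen_cylFin {B : Set ℕ+} (I : Finset B) (g : Gspace B) :
    IsOpen {h' : Hspace B | ∀ b ∈ I, (h' : Gspace B) b = g b} := by
  have he : {h' : Hspace B | ∀ b ∈ I, (h' : Gspace B) b = g b}
      = Subtype.val ⁻¹' ((I : Set B).pi fun b => {g b}) := by
    ext h'; simp [Set.mem_pi]
  rw [he]
  exact (isOpen_set_pi I.finite_toSet fun a _ => isOpen_discrete _).preimage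
    continuous_subtype_val

/-- The key arithmetic consequence of regularity of the window. -/
lemma good_of_free {B : Set ℕ+} (hB : B.Infinite)
    (hreg : window B = closure (interior (window B)))
    (n : ℤ) (hn : n ∈ FreeSet B) :
    ∃ L : ℤ, 0 < L ∧ ∀ j : ℤ, n + j * L ∈ FreeSet B := by
  classical
  obtain ⟨b₀, hb₀⟩ := hB.nonempty
  have hn0 : n ≠ 0 := fun h => hn b₀ hb₀ (h ▸ dvd_zero _)
  -- the auxiliary finite set S* controlling the divisors of n
  set P : ℕ → Prop := fun d => ∃ T : Finset ℕ+, ↑T ⊆ B ∧ d ∣ lcmS T with hP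
  set f : ℕ → Finset ℕ+ := fun d => if h : P d then h.choose else ∅ with hf
  set Sstar : Finset ℕ+ := (n.natAbs.divisors).sup f with hSstar
  have hSsub : ↑Sstar ⊆ B := by
    intro b hb
    rw [Finset.mem_coe, hSstar, Finset.mem_sup] at hb
    obtain ⟨d, _, hbf⟩ := hb
    have hbf' : b ∈ if h : P d then h.choose else ∅ := hbf
    by_cases h : P d
    · rw [dif_pos h] at hbf'
      exact h.choose_spec.1 hbf'
    · rw [dif_neg h] at hbf'
      exact absurd hbf' (Finset.notMem_empty b)
  have hSkey : ∀ d : ℕ, (d : ℤ) ∣ n → P d → d ∣ lcmS Sstar := by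
    intro d hdn hPd
    have hdmem : d ∈ n.natAbs.divisors :=
      Nat.mem_divisors.mpr ⟨Int.natCast_dvd_natCast.mp (Int.dvd_natAbs.mpr hdn),
        fun h => hn0 (Int.natAbs_eq_zero.mp h)⟩
    have hfd : f d ⊆ Sstar := by
      have h5 : f d ≤ n.natAbs.divisors.sup f := Finset.le_sup hdmem
      rw [hSstar]; exact h5
    have h1 : d ∣ lcmS (f d) := by
      show d ∣ lcmS (if h : P d then h.choose else ∅)
      rw [dif_pos hPd]
      exact hPd.choose_spec.2
    refine h1.trans (Finset.lcm_dvd fun b hb => Finset.dvd_lcm (hfd hb))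
  -- topology: find a good m congruent to n modulo everything in S*
  have h1 : deltaH B n ∈ closure (interior (window B)) :=
    hreg ▸ (deltaH_mem_window_iff B n).mpr hn
  set I : Finset B := Sstar.attach.image (fun x => (⟨x.1, hSsub x.2⟩ : B)) with hI
  obtain ⟨h₀, hh₀cyl, hh₀int⟩ := mem_closure_iff.mp h1 _
    (isOpen_cylFin I ((deltaH B n : Hspace B) : Gspace B)) (fun b _ => rfl)
  obtain ⟨J₀, hJ₀⟩ := exists_cyl_subset_s6 isOpen_interior hh₀int
  set J : Finset B := I ∪ J₀ with hJdef
  have hJwin : ∀ h' : Hspace B, (∀ b ∈ J, (h' : Gspace B) b = (h₀ : Gspace B) b) →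
      h' ∈ window B := by
    intro h' hh'
    exact interior_subset (hJ₀ fun b hb => hh' b (Finset.mem_union_right _ hb))
  obtain ⟨m, hm⟩ := exists_delta_close h₀ J
  set T : Finset ℕ+ := J.image Subtype.val with hT
  have hTB : ↑T ⊆ B := by
    intro b hb
    rw [Finset.coe_image] at hb
    obtain ⟨⟨b', hb'⟩, _, rfl⟩ := hb
    exact hb'
  set L : ℕ := lcmS T with hLdef
  have hLpos : 0 < L := lcmS_pos T
  -- A1/A2 : lcm S* divides m - n
  have A1 : ∀ b : ℕ+, b ∈ Sstar → ((b : ℕ) : ℤ) ∣ m - n := by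
    intro b hb
    have hbI : (⟨b, hSsub hb⟩ : B) ∈ I := by
      rw [hI, Finset.mem_image]
      exact ⟨⟨b, hb⟩, Sstar.mem_attach _, rfl⟩
    have e1 : ((deltaH B m : Hspace B) : Gspace B) ⟨b, hSsub hb⟩
        = ((deltaH B n : Hspace B) : Gspace B) ⟨b, hSsub hb⟩ := by
      rw [hm _ (Finset.mem_union_left _ hbI)]
      exact hh₀cyl _ hbI
    rw [deltaH_coe, deltaH_coe] at e1
    have h6 := Int.ModEq.dvd ((ZMod.intCast_eq_intCast_iff m n _).mp e1)
    have h7 : ((b : ℕ) : ℤ) ∣ -(n - m) := dvd_neg.mpr h6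
    simpa [neg_sub] using h7
  have A2 : (lcmS Sstar : ℤ) ∣ m - n := by
    rw [← Int.dvd_natAbs, Int.natCast_dvd_natCast]
    exact Finset.lcm_dvd fun b hb =>
      Int.natCast_dvd_natCast.mp (Int.dvd_natAbs.mpr (A1 b hb))
  -- A3 : the arithmetic progression of m with difference L is B-free
  have A3 : ∀ j : ℤ, m + j * (L : ℤ) ∈ FreeSet B := by
    intro j
    rw [← deltaH_mem_window_iff]
    refine hJwin _ ?_
    intro b hb
    have hbL : ((b : ℕ+) : ℕ) ∣ L := by
      rw [hLdef]
      refine Finset.dvd_lcm ?_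
      rw [hT, Finset.mem_image]
      exact ⟨b, hb, rfl⟩
    have hz : ((L : ℕ) : ZMod ((b : ℕ+) : ℕ)) = 0 := by
      rw [ZMod.natCast_eq_zero_iff]
      exact hbL
    rw [deltaH_coe, ← hm b hb, deltaH_coe]
    push_cast
    rw [hz]
    ring
  -- conclusion
  refine ⟨(L : ℤ), by exact_mod_cast hLpos, ?_⟩
  intro j b hb hdvd
  set d : ℕ := Nat.gcd (b : ℕ) L with hd
  have hdb : (d : ℤ) ∣ ((b : ℕ) : ℤ) := Int.natCast_dvd_natCast.mpr (Nat.gcd_dvd_left _ _)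
  have hdL : (d : ℤ) ∣ (L : ℤ) := Int.natCast_dvd_natCast.mpr (Nat.gcd_dvd_right _ _)
  have hdn : (d : ℤ) ∣ n := by
    have h2 : (d : ℤ) ∣ n + j * (L : ℤ) := hdb.trans hdvd
    have h3 : (d : ℤ) ∣ j * (L : ℤ) := hdL.mul_left j
    simpa using h2.sub h3
  have hdm : (d : ℤ) ∣ m := by
    have h4 : (d : ℤ) ∣ m - n :=
      (Int.natCast_dvd_natCast.mpr (hSkey d hdn ⟨T, hTB, Nat.gcd_dvd_right _ _⟩)).trans A2
    simpa using hdn.add h4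
  have hgcd : (Int.gcd ((b : ℕ) : ℤ) (L : ℤ) : ℤ) ∣ m := by
    have : Int.gcd ((b : ℕ) : ℤ) (L : ℤ) = d := rfl
    rw [this]; exact hdm
  obtain ⟨x, hx⟩ := solvable ((b : ℕ) : ℤ) (L : ℤ) m hgcd
  exact A3 x b hb hx

lemma eta_eq_true_iff (B : Set ℕ+) (n : ℤ) : eta B n = true ↔ n ∈ FreeSet B := by
  simp [eta]

lemma eta_toeplitz {B : Set ℕ+} (hB : B.Infinite)
    (hreg : window B = closure (interior (window B))) :
    ∀ n : ℤ, ∃ p : ℤ, 0 < p ∧ ∀ k : ℤ, eta B (n + k * p) = eta B n := by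
  intro n
  by_cases hn : n ∈ FreeSet B
  · obtain ⟨L, hL0, hL⟩ := good_of_free hB hreg n hn
    refine ⟨L, hL0, fun k => ?_⟩
    rw [(eta_eq_true_iff B n).mpr hn, (eta_eq_true_iff B _).mpr (hL k)]
  · rw [FreeSet] at hn
    simp only [Set.mem_setOf_eq] at hn
    push_neg at hn
    obtain ⟨b, hb, hdvd⟩ := hn
    refine ⟨((b : ℕ) : ℤ), by exact_mod_cast b.pos, fun k => ?_⟩
    have h1 : eta B n = false := by
      rw [← Bool.not_eq_true, eta_eq_true_iff]
      intro h; exact h b hb hdvd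
    have h2 : eta B (n + k * ((b : ℕ) : ℤ)) = false := by
      rw [← Bool.not_eq_true, eta_eq_true_iff]
      intro h
      exact h b hb (by exact dvd_add hdvd (Dvd.dvd.mul_left dvd_rfl k))
    rw [h1, h2]

lemma eta_period {B : Set ℕ+} (hB : B.Infinite)
    (hreg : window B = closure (interior (window B))) :
    ∀ N : ℕ, ∃ P : ℤ, 0 < P ∧
      ∀ j k : ℤ, |j| ≤ (N : ℤ) → eta B (j + k * P) = eta B j := by
  intro N
  choose p hp1 hp2 using eta_toeplitz hB hreg
  refine ⟨∏ j ∈ Finset.Icc (-(N : ℤ)) (N : ℤ), p j,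
    Finset.prod_pos fun i _ => hp1 i, fun j k hj => ?_⟩
  have hjmem : j ∈ Finset.Icc (-(N : ℤ)) (N : ℤ) := by
    rw [Finset.mem_Icc]
    exact ⟨neg_le_of_abs_le hj, le_of_abs_le hj⟩
  obtain ⟨c, hc⟩ := Finset.dvd_prod_of_mem p hjmem
  have harg : j + k * ∏ i ∈ Finset.Icc (-(N : ℤ)) (N : ℤ), p i = j + (k * c) * p j := by
    rw [hc]; ring
  rw [harg]
  exact hp2 j (k * c)

lemma eta_mem_orbitClosure {B : Set ℕ+} (hB : B.Infinite)
    (hreg : window B = closure (interior (window B)))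
    {x : ℤ → Bool} (hx : x ∈ Xeta B) : eta B ∈ closure (orbit x) := by
  rw [mem_closure_iff_finset]
  intro F
  set N : ℕ := F.sup (fun i => i.natAbs) with hN
  obtain ⟨P, hP0, hP⟩ := eta_period hB hreg N
  set M : ℤ := (N : ℤ) + P with hM
  have hx' := (mem_closure_iff_finset _ x).mp hx (Finset.Icc (-M) M)
  obtain ⟨y, ⟨k₀, rfl⟩, hy⟩ := hx'
  set r : ℤ := k₀ % P with hr
  have hr0 : 0 ≤ r := Int.emod_nonneg k₀ (ne_of_gt hP0)
  have hrP : r < P := Int.emod_lt_of_pos k₀ hP0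
  have hqr : P * (k₀ / P) + r = k₀ := Int.mul_ediv_add_emod k₀ P
  refine ⟨shift (-r) x, ⟨-r, rfl⟩, fun i hiF => ?_⟩
  have hiN : |i| ≤ (N : ℤ) := by
    have h1 : i.natAbs ≤ N := Finset.le_sup (f := fun i => i.natAbs) hiF
    rw [Int.abs_eq_natAbs]
    exact_mod_cast h1
  have hmem : i + -r ∈ Finset.Icc (-M) M := by
    rw [Finset.mem_Icc, hM]
    constructor
    · have := neg_le_of_abs_le hiN; linarith
    · have := le_of_abs_le hiN; linarith
  have h2 := hy (i + -r) hmem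
  -- h2 : shift k₀ (eta B) (i + -r) = x (i + -r)
  have h3 : eta B (i + -r + k₀) = x (i + -r) := h2
  have h4 : i + -r + k₀ = i + (k₀ / P) * P := by linarith [hqr]
  show x (i + -r) = eta B i
  rw [← h3, h4]
  exact hP i (k₀ / P) hiN

theorem statement6' (B : Set ℕ+) (hB : B.Infinite) (hprim : Primitive B)
    (hreg : window B = closure (interior (window B))) :
    (∀ x ∈ Xeta B, closure {y | ∃ k : ℤ, y = shift k x} = Xeta B) ∧
      (Xeta B).Nontrivial := by
  have hXeta : Xeta B = closure (orbit (eta B)) := rfl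
  constructor
  · intro x hx
    have h1 : closure (orbit x) ⊆ Xeta B := by
      rw [hXeta]
      exact orbitClosure_subset (hXeta ▸ hx)
    have h2 : Xeta B ⊆ closure (orbit x) := by
      rw [hXeta]
      exact orbitClosure_subset (eta_mem_orbitClosure hB hreg hx)
    exact le_antisymm h1 h2
  · -- nontriviality
    obtain ⟨b₀, hb₀⟩ := hB.nonempty
    have h0 : eta B 0 = false := by
      rw [← Bool.not_eq_true, eta_eq_true_iff]
      intro h; exact h b₀ hb₀ (dvd_zero _)
    have h1 : eta B 1 = true := by
      rw [eta_eq_true_iff]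
      intro b hb hdvd
      have hb1 : (b : ℕ) ∣ 1 := by exact_mod_cast hdvd
      obtain ⟨b', hb'⟩ := (hB.diff (Set.finite_singleton b)).nonempty
      have : b = b' := hprim b hb b' hb'.1 (hb1.trans (one_dvd _))
      exact hb'.2 (by rw [this]; rfl)
    have hetamem : eta B ∈ Xeta B := by
      rw [hXeta]
      exact subset_closure ⟨0, by funext n; simp [shift]⟩
    have hshiftmem : shift 1 (eta B) ∈ Xeta B := by
      rw [hXeta]
      exact subset_closure ⟨1, rfl⟩
    refine ⟨eta B, hetamem, shift 1 (eta B), hshiftmem, fun hEq => ?_⟩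
    have := congrFun hEq 0
    rw [h0] at this
    have h2 : shift 1 (eta B) 0 = eta B 1 := by simp [shift]
    rw [h2, h1] at this
    exact Bool.noConfusion this

/-- If `B` is an infinite primitive set of positive integers and the window `W`
is topologically regular, then the subshift `(X_η, σ)` is minimal and `X_η` has more than
one element. -/
theorem statement6 (B : Set ℕ+) (hB : B.Infinite) (hprim : Primitive B)
    (hreg : window B = closure (interior (window B))) :
    (∀ x ∈ Xeta B, closure {y | ∃ k : ℤ, y = shift k x} = Xeta B) ∧
      (Xeta B).Nontrivial :=
  statement6' B hB hprim hreg

end BFree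
end

section
/- Let B be an infinite primitive set of positive integers. Then the window W is topologically aperiodic: if h ∈ H satisfies W + h = W, then h = 0. -/
open Set MeasureTheory Filter Topology

namespace BFree

/-- For an infinite primitive set `B` of positive integers the window `W` is
topologically aperiodic: if `h ∈ H` satisfies `W + h = W`, then `h = 0`. -/
theorem statement12 (B : Set ℕ+) (hB : B.Infinite) (hprim : Primitive B) :
    ∀ h : Hspace B, (fun w => w + h) '' window B = window B → h = 0 := by
  intro h hW
  by_contra hne
  have hval : (h : Gspace B) ≠ 0 := fun hc => hne (Subtype.ext hc)
  obtain ⟨b0, hb0⟩ := Function.ne_iff.mp hval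
  simp only [Pi.zero_apply] at hb0
  -- density: approximate h at coordinate b0 by an integer n
  have hcl : (h : Gspace B) ∈ closure ((delta B).range : Set (Gspace B)) := h.2
  have hU : IsOpen {g : Gspace B | g b0 = (h : Gspace B) b0} := by
    have he : {g : Gspace B | g b0 = (h : Gspace B) b0}
        = (fun g : Gspace B => g b0) ⁻¹' {(h : Gspace B) b0} := rfl
    rw [he]
    exact (continuous_apply b0).isOpen_preimage _ (isOpen_discrete _)
  obtain ⟨g, hgU, hgr⟩ := mem_closure_iff.mp hcl _ hU rfl
  obtain ⟨n, rfl⟩ := hgr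
  set N : ℕ := ((b0 : ℕ+) : ℕ) with hN
  have hg1 : ((n : ℤ) : ZMod N) = (h : Gspace B) b0 := hgU
  have hnd : ¬ ((N : ℤ) ∣ n) := by
    intro hd
    apply hb0
    rw [← hg1, ZMod.intCast_zmod_eq_zero_iff_dvd]
    exact hd
  set m : ℕ := Int.gcd n (N : ℤ) with hm
  have hmdvdn : ((m : ℤ)) ∣ n := Int.gcd_dvd_left n (N : ℤ)
  have hmdvdN : m ∣ N := by
    have := Int.gcd_dvd_right (a := n) (b := (N : ℤ))
    exact_mod_cast this
  -- m is B-free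
  have hfree : ∀ b : B, (((m : ℤ)) : ZMod ((b : ℕ+) : ℕ)) ≠ 0 := by
    intro b hc
    rw [ZMod.intCast_zmod_eq_zero_iff_dvd] at hc
    have hbm : ((b : ℕ+) : ℕ) ∣ m := by exact_mod_cast hc
    have heq : (b : ℕ+) = (b0 : ℕ+) := hprim _ b.2 _ b0.2 (hbm.trans hmdvdN)
    apply hnd
    have hNm : N ∣ m := by rw [hN, ← heq]; exact hbm
    exact dvd_trans (by exact_mod_cast hNm) hmdvdn
  have hdmem : deltaH B (m : ℤ) ∈ window B := fun b => hfree b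
  -- Bézout: find j with N ∣ m + j * n
  set j : ℤ := -(Int.gcdA n (N : ℤ)) with hj
  have hdvd : (N : ℤ) ∣ ((m : ℤ) + j * n) := by
    refine ⟨Int.gcdB n (N : ℤ), ?_⟩
    have hb := Int.gcd_eq_gcd_ab n (N : ℤ)
    rw [hj]
    rw [← hm] at hb
    linarith [hb]
  -- translation by h preserves the window both ways
  have hstep : ∀ w : Hspace B, w ∈ window B ↔ w + h ∈ window B := by
    intro w
    constructor
    · intro hw
      rw [← hW]
      exact ⟨w, hw, rfl⟩
    · intro hw
      rw [← hW] at hw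
      obtain ⟨w', hw', he⟩ := hw
      have : w' = w := add_right_cancel he
      rwa [this] at hw'
  have key : ∀ k : ℤ, ∀ w : Hspace B, w ∈ window B → w + k • h ∈ window B := by
    intro k
    induction k using Int.induction_on with
    | zero => intro w hw; simpa using hw
    | succ k ih =>
      intro w hw
      have h1 := (hstep _).mp (ih w hw)
      have : w + ((k : ℤ) + 1) • h = w + (k : ℤ) • h + h := by
        rw [add_zsmul, one_zsmul]; abel
      rwa [this]
    | pred k ih =>
      intro w hw
      have h1 := ih w hw
      apply (hstep _).mpr
      have : w + (-(k : ℤ) - 1) • h + h = w + (-(k : ℤ)) • h := by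
        rw [sub_zsmul, one_zsmul]; abel
      rwa [this]
  have hmem := key j (deltaH B (m : ℤ)) hdmem
  apply hmem b0
  have hcoe : ((deltaH B (m : ℤ) + j • h : Hspace B) : Gspace B) b0
      = (((m : ℤ)) : ZMod N) + j • ((h : Gspace B) b0) := by
    simp only [AddSubgroup.coe_add, AddSubgroupClass.coe_zsmul, Pi.add_apply, Pi.smul_apply]
    rfl
  rw [hcoe, ← hg1]
  have : (((m : ℤ)) : ZMod N) + j • (((n : ℤ)) : ZMod N)
      = (((m : ℤ) + j * n : ℤ) : ZMod N) := by
    push_cast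
    rw [zsmul_eq_mul]
  rw [this, ZMod.intCast_zmod_eq_zero_iff_dvd]
  exact hdvd

end BFree
end
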